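/- Fix β ≥ 0 and consider the (SA) dynamics for n particles on S^{d-1} with d ≥ 2. If the initial configuration (x_1(0),...,x_n(0)) is α-clustered for some α ≥ 0, i.e., ⟨x_i(0), x_j(0)⟩ > α for all i, j ∈ [n], then there exists x* ∈ S^{d-1} and constants C, λ > 0 such that ‖x_i(t) - x*‖ ≤ C e^{-λt} for all i ∈ [n] and t ≥ 0. -/

import Mathlib

open Set
open scoped RealInnerProductSpace

/-- The self-attention vector field on the sphere. -/
noncomputable def SAfield {d n : ℕ} (β : ℝ) (x : Fin n → EuclideanSpace ℝ (Fin d))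
    (i : Fin n) : EuclideanSpace ℝ (Fin d) :=
  let v := (∑ k, Real.exp (β * ⟪x i, x k⟫))⁻¹ •
      ∑ j, Real.exp (β * ⟪x i, x j⟫) • x j
  v - ⟪x i, v⟫ • x i

open Filter Topology

lemma SA_inner_ge {d n : ℕ} {β : ℝ} (hβ : 0 ≤ β) {y : Fin n → EuclideanSpace ℝ (Fin d)}
    (hy : ∀ k, ‖y k‖ = 1) (i j : Fin n) {F : ℝ} (hF1 : F ≤ 1)
    (hlow : ∀ k l, 1 - F ≤ ⟪y k, y l⟫) (hij : ⟪y i, y j⟫ = 1 - F) :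
    Real.exp (-(2*β)) / n * F ≤ ⟪SAfield β y i, y j⟫ := by
  have hn : 0 < n := i.pos
  have habs : ∀ k l : Fin n, |⟪y k, y l⟫| ≤ 1 := fun k l => by
    simpa [hy k, hy l] using abs_real_inner_le_norm (y k) (y l)
  have hF0 : 0 ≤ F := by
    have := (abs_le.mp (habs i j)).2
    rw [hij] at this; linarith
  set e : Fin n → ℝ := fun k => Real.exp (β * ⟪y i, y k⟫) with he
  have hepos : ∀ k, 0 < e k := fun k => Real.exp_pos _
  have helow : ∀ k, Real.exp (-β) ≤ e k := fun k => by
    apply Real.exp_le_exp.mpr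
    nlinarith [(abs_le.mp (habs i k)).1]
  have hehigh : ∀ k, e k ≤ Real.exp β := fun k => by
    apply Real.exp_le_exp.mpr
    nlinarith [(abs_le.mp (habs i k)).2]
  set Z : ℝ := ∑ k, e k with hZ
  have : Nonempty (Fin n) := ⟨i⟩
  have hZpos : 0 < Z := Finset.sum_pos (fun k _ => hepos k) Finset.univ_nonempty
  have hZle : Z ≤ n * Real.exp β := by
    calc Z ≤ ∑ _k : Fin n, Real.exp β := Finset.sum_le_sum fun k _ => hehigh k
    _ = n * Real.exp β := by simp [Finset.sum_const, nsmul_eq_mul]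
  have hSA : SAfield β y i
      = (Z⁻¹ • ∑ k, e k • y k) - ⟪y i, Z⁻¹ • ∑ k, e k • y k⟫ • y i := rfl
  have h1 : ⟪Z⁻¹ • ∑ k, e k • y k, y j⟫ = Z⁻¹ * ∑ k, e k * ⟪y k, y j⟫ := by
    rw [real_inner_smul_left, sum_inner]
    simp only [real_inner_smul_left]
  have h2 : ⟪y i, Z⁻¹ • ∑ k, e k • y k⟫ = Z⁻¹ * ∑ k, e k * ⟪y i, y k⟫ := by
    rw [real_inner_smul_right, inner_sum]
    simp only [real_inner_smul_right]
  have hval : ⟪SAfield β y i, y j⟫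
      = Z⁻¹ * ∑ k, e k * (⟪y k, y j⟫ - ⟪y i, y k⟫ * (1 - F)) := by
    rw [hSA, inner_sub_left, h1, real_inner_smul_left, h2, hij]
    rw [show (∑ k, e k * (⟪y k, y j⟫ - ⟪y i, y k⟫ * (1 - F)))
        = ∑ k, (e k * ⟪y k, y j⟫ - e k * ⟪y i, y k⟫ * (1 - F)) from
      Finset.sum_congr rfl (fun k _ => by ring)]
    rw [Finset.sum_sub_distrib, ← Finset.sum_mul, mul_sub]
    ring
  have hterm : ∀ k, 0 ≤ e k * (⟪y k, y j⟫ - ⟪y i, y k⟫ * (1 - F)) := by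
    intro k
    apply mul_nonneg (hepos k).le
    have h1 := hlow k j
    have h2 := (abs_le.mp (habs i k)).2
    nlinarith
  have hjj : ⟪y j, y j⟫ = 1 := by
    rw [real_inner_self_eq_norm_mul_norm, hy j]; norm_num
  have htj : Real.exp (-β) * F ≤ e j * (⟪y j, y j⟫ - ⟪y i, y j⟫ * (1 - F)) := by
    rw [hjj, hij]
    nlinarith [mul_le_mul_of_nonneg_right (helow j) hF0,
      mul_nonneg (mul_nonneg (hepos j).le hF0) (by linarith : (0:ℝ) ≤ 1 - F)]
  have hsum : Real.exp (-β) * F ≤ ∑ k, e k * (⟪y k, y j⟫ - ⟪y i, y k⟫ * (1 - F)) :=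
    le_trans htj (Finset.single_le_sum (fun k _ => hterm k) (Finset.mem_univ j))
  rw [hval]
  have hZinv : ((n : ℝ) * Real.exp β)⁻¹ ≤ Z⁻¹ := by
    exact inv_anti₀ hZpos hZle
  calc Real.exp (-(2*β)) / n * F = ((n : ℝ) * Real.exp β)⁻¹ * (Real.exp (-β) * F) := by
        have h3 : Real.exp (-(2*β)) = Real.exp (-β) * Real.exp (-β) := by
          rw [← Real.exp_add]; congr 1; ring
        rw [h3, mul_inv, ← Real.exp_neg]
        ring
    _ ≤ Z⁻¹ * (Real.exp (-β) * F) := by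
        apply mul_le_mul_of_nonneg_right hZinv (by positivity)
    _ ≤ Z⁻¹ * ∑ k, e k * (⟪y k, y j⟫ - ⟪y i, y k⟫ * (1 - F)) :=
        mul_le_mul_of_nonneg_left hsum (inv_nonneg.mpr hZpos.le)

lemma SA_norm_le {d n : ℕ} {β : ℝ} {y : Fin n → EuclideanSpace ℝ (Fin d)}
    (hy : ∀ k, ‖y k‖ = 1) {F : ℝ} (hF0 : 0 ≤ F)
    (hlow : ∀ k l, 1 - F ≤ ⟪y k, y l⟫) (i : Fin n) :
    ‖SAfield β y i‖ ≤ 2 * Real.sqrt (2*F) := by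
  have hn : 0 < n := i.pos
  have : Nonempty (Fin n) := ⟨i⟩
  set e : Fin n → ℝ := fun k => Real.exp (β * ⟪y i, y k⟫) with he
  have hepos : ∀ k, 0 < e k := fun k => Real.exp_pos _
  set Z : ℝ := ∑ k, e k with hZ
  have hZpos : 0 < Z := Finset.sum_pos (fun k _ => hepos k) Finset.univ_nonempty
  set v : EuclideanSpace ℝ (Fin d) := Z⁻¹ • ∑ k, e k • y k with hv
  have hSA : SAfield β y i = v - ⟪y i, v⟫ • y i := rfl
  have hdist : ∀ k l, ‖y k - y l‖ ≤ Real.sqrt (2*F) := by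
    intro k l
    have hsq : ‖y k - y l‖^2 ≤ 2*F := by
      rw [norm_sub_sq_real, hy k, hy l]
      have := hlow k l
      nlinarith
    have := Real.sqrt_le_sqrt hsq
    rwa [Real.sqrt_sq (norm_nonneg _)] at this
  have hv_sub : v - y i = Z⁻¹ • ∑ k, e k • (y k - y i) := by
    rw [hv]
    have : (∑ k, e k • (y k - y i)) = (∑ k, e k • y k) - Z • y i := by
      rw [hZ, Finset.sum_smul]
      rw [← Finset.sum_sub_distrib]
      exact Finset.sum_congr rfl fun k _ => smul_sub _ _ _
    rw [this, smul_sub, smul_smul, inv_mul_cancel₀ hZpos.ne', one_smul]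
  have hnv : ‖v - y i‖ ≤ Real.sqrt (2*F) := by
    rw [hv_sub]
    rw [norm_smul, Real.norm_eq_abs, abs_of_pos (inv_pos.mpr hZpos)]
    have h1 : ‖∑ k, e k • (y k - y i)‖ ≤ ∑ k, e k * Real.sqrt (2*F) := by
      refine le_trans (norm_sum_le _ _) (Finset.sum_le_sum fun k _ => ?_)
      rw [norm_smul, Real.norm_eq_abs, abs_of_pos (hepos k)]
      exact mul_le_mul_of_nonneg_left (hdist k i) (hepos k).le
    have h2 : ∑ k, e k * Real.sqrt (2*F) = Z * Real.sqrt (2*F) := by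
      rw [hZ, ← Finset.sum_mul]
    calc Z⁻¹ * ‖∑ k, e k • (y k - y i)‖ ≤ Z⁻¹ * (Z * Real.sqrt (2*F)) := by
          apply mul_le_mul_of_nonneg_left _ (inv_nonneg.mpr hZpos.le)
          rw [← h2]; exact h1
      _ = Real.sqrt (2*F) := by field_simp
  have hii : ⟪y i, y i⟫ = 1 := by
    rw [real_inner_self_eq_norm_mul_norm, hy i]; norm_num
  have hre : v - ⟪y i, v⟫ • y i = (v - y i) + (1 - ⟪y i, v⟫) • y i := by
    rw [sub_smul, one_smul]; abel
  have hco : |1 - ⟪y i, v⟫| ≤ ‖v - y i‖ := by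
    have h1 : (1:ℝ) - ⟪y i, v⟫ = ⟪y i, y i - v⟫ := by
      rw [inner_sub_right, hii]
    rw [h1]
    calc |⟪y i, y i - v⟫| ≤ ‖y i‖ * ‖y i - v‖ := abs_real_inner_le_norm _ _
      _ = ‖v - y i‖ := by rw [hy i, one_mul, norm_sub_rev]
  rw [hSA, hre]
  calc ‖(v - y i) + (1 - ⟪y i, v⟫) • y i‖ ≤ ‖v - y i‖ + ‖(1 - ⟪y i, v⟫) • y i‖ :=
        norm_add_le _ _
    _ = ‖v - y i‖ + |1 - ⟪y i, v⟫| := by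
        rw [norm_smul, Real.norm_eq_abs, hy i, mul_one]
    _ ≤ Real.sqrt (2*F) + Real.sqrt (2*F) := add_le_add hnv (le_trans hco hnv)
    _ = 2 * Real.sqrt (2*F) := by ring

set_option maxHeartbeats 1000000 in
/-- If the initial configuration of the (SA) dynamics is `α`-clustered for some
`α ≥ 0` (i.e. `⟨x_i(0), x_j(0)⟩ > α` for all `i,j`), then all particles converge
exponentially fast to a common limit point `x* ∈ S^{d-1}`. -/

theorem stmt_18 {d n : ℕ} (hd : 2 ≤ d) (hn : 0 < n) (β : ℝ) (hβ : 0 ≤ β)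
    (α : ℝ) (hα : 0 ≤ α)
    (x : Fin n → ℝ → EuclideanSpace ℝ (Fin d))
    (hsphere : ∀ i t, x i t ∈ Metric.sphere (0 : EuclideanSpace ℝ (Fin d)) 1)
    (hode : ∀ i, ∀ t ∈ Ici (0:ℝ),
      HasDerivAt (x i) (SAfield β (fun j => x j t) i) t)
    (hclustered : ∀ i j, α < ⟪x i 0, x j 0⟫) :
    ∃ xstar ∈ Metric.sphere (0 : EuclideanSpace ℝ (Fin d)) 1,
      ∃ C > 0, ∃ lam > 0, ∀ i, ∀ t ∈ Ici (0:ℝ),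
        ‖x i t - xstar‖ ≤ C * Real.exp (-lam * t) := by
  classical
  have i0 : Fin n := ⟨0, hn⟩
  have hyn : ∀ i t, ‖x i t‖ = 1 := fun i t => by
    simpa using mem_sphere_zero_iff_norm.mp (hsphere i t)
  set c : ℝ := Real.exp (-(2*β)) / n with hc
  have hcpos : 0 < c := div_pos (Real.exp_pos _) (Nat.cast_pos.mpr hn)
  set u : Fin n × Fin n → ℝ → ℝ := fun p t => 1 - ⟪x p.1 t, x p.2 t⟫ with hu
  have hNe : (Finset.univ : Finset (Fin n × Fin n)).Nonempty := ⟨(i0,i0), Finset.mem_univ _⟩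
  set f : ℝ → ℝ := fun t => Finset.univ.sup' hNe (fun p => u p t) with hf
  have hfle : ∀ p t, u p t ≤ f t := fun p t => Finset.le_sup' (fun q => u q t) (Finset.mem_univ p)
  have hf0 : ∀ t, 0 ≤ f t := by
    intro t
    have h1 : u (i0, i0) t = 0 := by
      simp only [hu]
      rw [real_inner_self_eq_norm_mul_norm, hyn i0 t]; norm_num
    have := hfle (i0, i0) t
    linarith
  -- derivatives of u
  have hu' : ∀ p : Fin n × Fin n, ∀ t ∈ Ici (0:ℝ), HasDerivAt (u p)
      (-(⟪x p.1 t, SAfield β (fun j => x j t) p.2⟫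
        + ⟪SAfield β (fun j => x j t) p.1, x p.2 t⟫)) t := by
    intro p t ht
    exact ((hode p.1 t ht).inner ℝ (hode p.2 t ht)).const_sub 1
  have hucont : ∀ p : Fin n × Fin n, ∀ t ∈ Ici (0:ℝ), ContinuousAt (u p) t :=
    fun p t ht => (hu' p t ht).continuousAt
  have hfcont : ∀ t ∈ Ici (0:ℝ), ContinuousAt f t := by
    intro t ht
    exact ContinuousAt.finset_sup'_apply hNe fun p _ => hucont p t ht
  -- key derivative inequality at maximizers
  have hkey : ∀ t ∈ Ici (0:ℝ), f t ≤ 1 → ∀ p : Fin n × Fin n, u p t = f t →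
      (-(⟪x p.1 t, SAfield β (fun j => x j t) p.2⟫
        + ⟪SAfield β (fun j => x j t) p.1, x p.2 t⟫)) ≤ -(2*c) * f t := by
    intro t ht h1 p hp
    have hlow : ∀ k l, 1 - f t ≤ ⟪x k t, x l t⟫ := by
      intro k l
      have := hfle (k, l) t
      simp only [hu] at this
      linarith
    have hij : ⟪x p.1 t, x p.2 t⟫ = 1 - f t := by
      simp only [hu] at hp; linarith
    have hji : ⟪x p.2 t, x p.1 t⟫ = 1 - f t := by
      rw [real_inner_comm]; exact hij
    have A1 := SA_inner_ge hβ (fun k => hyn k t) p.1 p.2 h1 hlow hij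
    have A2 := SA_inner_ge hβ (fun k => hyn k t) p.2 p.1 h1 hlow hji
    rw [real_inner_comm] at A2
    rw [← hc] at A1 A2
    linarith
  -- Gronwall on intervals where f ≤ 1
  have gron : ∀ b : ℝ, 0 ≤ b → (∀ s ∈ Icc (0:ℝ) b, f s ≤ 1) →
      ∀ s ∈ Icc (0:ℝ) b, f s ≤ f 0 * Real.exp (-(2*c) * s) := by
    intro b hb hone
    have H := le_gronwallBound_of_liminf_deriv_right_le
      (f := f) (f' := fun s => -(2*c) * f s) (δ := f 0) (K := -(2*c)) (ε := 0)
      (a := 0) (b := b)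
      (fun s hs => (hfcont s hs.1).continuousWithinAt)
      ?_ le_rfl (fun s hs => by simp)
    · intro s hs
      have := H s hs
      rwa [gronwallBound_ε0, sub_zero] at this
    intro s hs r hr
    have hs0 : s ∈ Ici (0:ℝ) := hs.1
    have hone' : f s ≤ 1 := hone s ⟨hs.1, hs.2.le⟩
    -- eventual bound for each p
    have hev : ∀ p : Fin n × Fin n, ∀ᶠ z in 𝓝[>] s, u p z < f s + r * (z - s) := by
      intro p
      by_cases hp : u p s = f s
      · -- active pair: use slope convergence
        have hd := hu' p s hs0
        have hder := hkey s hs0 hone' p hp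
        have hlt : (-(⟪x p.1 s, SAfield β (fun j => x j s) p.2⟫
            + ⟪SAfield β (fun j => x j s) p.1, x p.2 s⟫)) < r := lt_of_le_of_lt hder hr
        have hslope := hasDerivAt_iff_tendsto_slope.mp hd
        have hev1 : ∀ᶠ z in 𝓝[≠] s, slope (u p) s z < r :=
          hslope.eventually_lt_const hlt
        have hmono : 𝓝[>] s ≤ 𝓝[≠] s :=
          nhdsWithin_mono s fun z hz => ne_of_gt hz
        filter_upwards [hev1.filter_mono hmono, self_mem_nhdsWithin] with z hz hzs
        have hz3 : 0 < z - s := sub_pos.mpr hzs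
        rw [slope_def_field, div_lt_iff₀ hz3] at hz
        rw [hp] at hz
        linarith
      · -- inactive pair
        have hlt : u p s < f s := lt_of_le_of_ne (hfle p s) hp
        set ε := (f s - u p s)/2 with hε
        have hεpos : 0 < ε := by rw [hε]; exact half_pos (by linarith)
        have h1 : ∀ᶠ z in 𝓝 s, u p z < u p s + ε := by
          have := hucont p s hs0
          exact this.eventually_lt continuousAt_const (by linarith)
        have h2 : Ioo s (s + ε / (|r| + 1)) ∈ 𝓝[>] s := by
          apply Ioo_mem_nhdsGT_of_mem
          constructor
          · exact le_refl s
          · have : 0 < |r| + 1 := by positivity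
            have := div_pos hεpos this
            linarith
        filter_upwards [h1.filter_mono nhdsWithin_le_nhds, h2] with z hz1 hz2
        have hz3 : 0 < z - s := by linarith [hz2.1]
        have hz4 : z - s < ε / (|r| + 1) := by linarith [hz2.2]
        have h5 : |r| * (z - s) < ε := by
          have h6 : 0 < |r| + 1 := by positivity
          calc |r| * (z - s) ≤ (|r| + 1) * (z - s) := by nlinarith
            _ < (|r| + 1) * (ε / (|r| + 1)) := by
                apply mul_lt_mul_of_pos_left hz4 h6
            _ = ε := by field_simp
        have h7 : -(r * (z - s)) ≤ |r| * (z - s) := by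
          rw [← neg_mul]
          exact mul_le_mul_of_nonneg_right (neg_le_abs r) hz3.le
        have e1 : u p z < f s - ε := by
          rw [hε] at hz1 ⊢; linarith
        have e2 : -ε < r * (z - s) := by linarith
        linarith
    have hev2 : ∀ᶠ z in 𝓝[>] s, (z - s)⁻¹ * (f z - f s) < r := by
      filter_upwards [eventually_all.mpr hev, self_mem_nhdsWithin] with z hz hzs
      have hz3 : 0 < z - s := by
        simp only [mem_Ioi] at hzs; linarith
      have hfz : f z < f s + r * (z - s) := by
        rw [hf, Finset.sup'_lt_iff]
        exact fun p _ => hz p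
      rw [← div_eq_inv_mul, div_lt_iff₀ hz3]
      linarith
    exact hev2.frequently
  -- f 0 < 1
  have hf01 : f 0 < 1 := by
    rw [hf, Finset.sup'_lt_iff]
    intro p _
    have := hclustered p.1 p.2
    simp only [hu]
    linarith
  -- invariance: f ≤ 1 on Ici 0
  have hone : ∀ t ∈ Ici (0:ℝ), f t ≤ 1 := by
    intro T hT
    by_contra hcon
    push_neg at hcon
    set S : Set ℝ := Icc 0 T ∩ f ⁻¹' Ici 1 with hS
    have hSne : S.Nonempty := ⟨T, ⟨hT, le_refl T⟩, hcon.le⟩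
    have hSbdd : BddBelow S := ⟨0, fun t ht => ht.1.1⟩
    have hScl : IsClosed S := by
      have hcont : ContinuousOn f (Icc 0 T) :=
        fun s hs => (hfcont s hs.1).continuousWithinAt
      exact hcont.preimage_isClosed_of_isClosed isClosed_Icc isClosed_Ici
    have hτS : sInf S ∈ S := hScl.csInf_mem hSne hSbdd
    set τ := sInf S with hτ
    have hτ0 : 0 ≤ τ := hτS.1.1
    have hτ1 : 1 ≤ f τ := hτS.2
    have hτpos : 0 < τ := by
      rcases eq_or_lt_of_le hτ0 with h | h
      · exfalso; rw [← h] at hτ1; linarith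
      · exact h
    have hltτ : ∀ s, 0 ≤ s → s < τ → f s < 1 := by
      intro s h0 hsτ
      by_contra h; push_neg at h
      have hsS : s ∈ S := ⟨⟨h0, hsτ.le.trans hτS.1.2⟩, h⟩
      exact absurd (csInf_le hSbdd hsS) (not_le.mpr hsτ)
    have hfτ : f τ ≤ 1 := by
      by_contra h; push_neg at h
      have h2 : ∀ᶠ z in 𝓝[<] τ, 1 < f z :=
        (((hfcont τ hτ0).eventually_const_lt h).filter_mono nhdsWithin_le_nhds)
      have h3 : Ioo 0 τ ∈ 𝓝[<] τ := Ioo_mem_nhdsLT_of_mem ⟨hτpos, le_refl τ⟩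
      obtain ⟨z, hz1, hz2⟩ := (h2.and (eventually_of_mem h3 fun z hz => hz)).exists
      exact absurd (hltτ z hz2.1.le hz2.2) (not_lt.mpr hz1.le)
    have hall : ∀ s ∈ Icc (0:ℝ) τ, f s ≤ 1 := by
      intro s hs
      rcases eq_or_lt_of_le hs.2 with h | h
      · rw [h]; exact hfτ
      · exact (hltτ s hs.1 h).le
    have hgr := gron τ hτ0 hall τ ⟨hτ0, le_refl τ⟩
    have hexp : Real.exp (-(2*c)*τ) ≤ 1 := by
      rw [Real.exp_le_one_iff]
      nlinarith
    nlinarith [hf0 0]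
  -- exponential decay of f
  have hdecay : ∀ t ∈ Ici (0:ℝ), f t ≤ f 0 * Real.exp (-(2*c)*t) := by
    intro t ht
    exact gron t ht (fun s hs => hone s hs.1) t ⟨ht, le_refl t⟩
  -- sqrt algebra
  have hsqrt : ∀ t : ℝ, Real.sqrt (2 * (f 0 * Real.exp (-(2*c)*t)))
      = Real.sqrt (2 * f 0) * Real.exp (-c*t) := by
    intro t
    have h1 : Real.exp (-(2*c)*t) = (Real.exp (-c*t))^2 := by
      rw [sq, ← Real.exp_add]; congr 1; ring
    rw [show 2 * (f 0 * Real.exp (-(2*c)*t)) = (2 * f 0) * (Real.exp (-c*t))^2 by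
      rw [h1]; ring]
    rw [Real.sqrt_mul (by nlinarith [hf0 0] : (0:ℝ) ≤ 2 * f 0),
      Real.sqrt_sq (Real.exp_pos _).le]
  set M : ℝ := 2 * Real.sqrt (2 * f 0) with hM
  have hM0 : 0 ≤ M := by positivity
  have hFlow : ∀ t ∈ Ici (0:ℝ), ∀ k l : Fin n,
      1 - f 0 * Real.exp (-(2*c)*t) ≤ ⟪x k t, x l t⟫ := by
    intro t ht k l
    have h1 := hfle (k,l) t
    have h2 := hdecay t ht
    simp only [hu] at h1
    linarith
  have hvel : ∀ i, ∀ t ∈ Ici (0:ℝ),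
      ‖SAfield β (fun j => x j t) i‖ ≤ M * Real.exp (-c*t) := by
    intro i t ht
    have hF0' : (0:ℝ) ≤ f 0 * Real.exp (-(2*c)*t) :=
      mul_nonneg (hf0 0) (Real.exp_pos _).le
    have h := SA_norm_le (β := β) (fun k => hyn k t) hF0' (hFlow t ht) i
    rw [hsqrt t] at h
    rw [hM]
    linarith
  have hsep : ∀ k l : Fin n, ∀ t ∈ Ici (0:ℝ),
      ‖x k t - x l t‖ ≤ Real.sqrt (2 * f 0) * Real.exp (-c*t) := by
    intro k l t ht
    have hsq : ‖x k t - x l t‖^2 ≤ 2 * (f 0 * Real.exp (-(2*c)*t)) := by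
      rw [norm_sub_sq_real, hyn k t, hyn l t]
      have := hFlow t ht k l
      nlinarith
    have h2 := Real.sqrt_le_sqrt hsq
    rwa [Real.sqrt_sq (norm_nonneg _), hsqrt t] at h2
  -- distance traveled bound
  have hdist : ∀ i, ∀ s ∈ Ici (0:ℝ), ∀ t, s ≤ t →
      ‖x i t - x i s‖ ≤ M / c * Real.exp (-c*s) := by
    intro i s hs t hts
    have key := image_norm_le_of_norm_deriv_right_le_deriv_boundary
      (f := fun r => x i r - x i s) (f' := fun r => SAfield β (fun j => x j r) i)
      (a := s) (b := t)
      (B := fun r => M/c * (Real.exp (-c*s) - Real.exp (-c*r)))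
      (B' := fun r => M * Real.exp (-c*r))
      ?hcont ?hder ?hinit ?hB ?hbound (right_mem_Icc.mpr hts)
    · calc ‖x i t - x i s‖ ≤ M/c * (Real.exp (-c*s) - Real.exp (-c*t)) := key
        _ ≤ M/c * Real.exp (-c*s) := by
            have h1 : 0 < Real.exp (-c*t) := Real.exp_pos _
            have hMc : 0 ≤ M / c := div_nonneg hM0 hcpos.le
            nlinarith
    case hcont =>
      intro r hr
      have hr0 : (0:ℝ) ≤ r := le_trans hs hr.1
      exact ((hode i r hr0).continuousAt.continuousWithinAt).sub continuousWithinAt_const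
    case hder =>
      intro r hr
      have hr0 : (0:ℝ) ≤ r := le_trans hs hr.1
      exact ((hode i r hr0).sub_const (x i s)).hasDerivWithinAt
    case hinit => simp
    case hB =>
      intro r
      have h1 : HasDerivAt (fun r : ℝ => Real.exp (-c*r)) (Real.exp (-c*r) * (-c)) r := by
        have h0 : HasDerivAt (fun r : ℝ => -c * r) (-c) r := by
          simpa using (hasDerivAt_id r).const_mul (-c)
        exact h0.exp
      have h2 := (h1.const_sub (Real.exp (-c*s))).const_mul (M/c)
      refine h2.congr_deriv ?_
      rw [div_mul_eq_mul_div, div_eq_iff hcpos.ne']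
      ring
    case hbound =>
      intro r hr
      have hr0 : (0:ℝ) ≤ r := le_trans hs hr.1
      exact hvel i r hr0
  -- Cauchy sequence along natural times
  set y : ℕ → EuclideanSpace ℝ (Fin d) := fun k => x i0 (k : ℝ) with hy
  have hdd : ∀ m k N : ℕ, N ≤ m → m ≤ k →
      dist (y m) (y k) ≤ M / c * Real.exp (-c*N) := by
    intro m k N hm hk
    have h1 := hdist i0 (m : ℝ) (mem_Ici.mpr (Nat.cast_nonneg m)) (k : ℝ) (Nat.cast_le.mpr hk)
    rw [dist_eq_norm, norm_sub_rev]
    calc ‖x i0 (k:ℝ) - x i0 (m:ℝ)‖ ≤ M/c * Real.exp (-c*(m:ℝ)) := h1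
      _ ≤ M/c * Real.exp (-c*(N:ℝ)) := by
          apply mul_le_mul_of_nonneg_left _ (div_nonneg hM0 hcpos.le)
          apply Real.exp_le_exp.mpr
          have h2 : (N:ℝ) ≤ (m:ℝ) := Nat.cast_le.mpr hm
          nlinarith
  have hycauchy : CauchySeq y := by
    apply cauchySeq_of_le_tendsto_0 (b := fun N : ℕ => M / c * Real.exp (-c*(N:ℝ)))
    · intro m k N hm hk
      rcases le_total m k with h | h
      · exact hdd m k N hm h
      · rw [dist_comm]; exact hdd k m N hk h
    · have h1 : Tendsto (fun N : ℕ => -c * (N:ℝ)) atTop atBot :=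
        (tendsto_natCast_atTop_atTop).const_mul_atTop_of_neg (by linarith)
      have h2 : Tendsto (fun N : ℕ => Real.exp (-c*(N:ℝ))) atTop (𝓝 0) :=
        Real.tendsto_exp_atBot.comp h1
      have h3 := h2.const_mul (M/c)
      simpa using h3
  obtain ⟨xstar, hxstar⟩ := cauchySeq_tendsto_of_complete hycauchy
  have hxsphere : xstar ∈ Metric.sphere (0 : EuclideanSpace ℝ (Fin d)) 1 := by
    rw [mem_sphere_zero_iff_norm]
    have h1 : Tendsto (fun k => ‖y k‖) atTop (𝓝 ‖xstar‖) := hxstar.norm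
    have h2 : (fun k : ℕ => ‖y k‖) = fun _ => (1:ℝ) := funext fun k => hyn i0 _
    rw [h2] at h1
    exact tendsto_nhds_unique h1 tendsto_const_nhds
  have hCpos : (0:ℝ) < M/c + Real.sqrt (2*f 0) + 1 := by
    nlinarith [div_nonneg hM0 hcpos.le, Real.sqrt_nonneg (2*f 0)]
  refine ⟨xstar, hxsphere, M/c + Real.sqrt (2*f 0) + 1, hCpos, c, hcpos, ?_⟩
  intro i t ht
  have hbd : ∀ᶠ k : ℕ in atTop,
      ‖x i t - y k‖ ≤ (M/c + Real.sqrt (2*f 0)) * Real.exp (-c*t) := by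
    filter_upwards [eventually_ge_atTop ⌈t⌉₊] with k hk
    have htk : t ≤ (k:ℝ) := le_trans (Nat.le_ceil t) (Nat.cast_le.mpr hk)
    have h1 : ‖x i t - x i (k:ℝ)‖ ≤ M/c * Real.exp (-c*t) := by
      have := hdist i t ht (k:ℝ) htk
      rwa [norm_sub_rev]
    have h2 : ‖x i (k:ℝ) - y k‖ ≤ Real.sqrt (2*f 0) * Real.exp (-c*t) := by
      have h3 := hsep i i0 (k:ℝ) (mem_Ici.mpr (le_trans (mem_Ici.mp ht) htk))
      calc ‖x i (k:ℝ) - y k‖ ≤ Real.sqrt (2*f 0) * Real.exp (-c*(k:ℝ)) := h3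
        _ ≤ Real.sqrt (2*f 0) * Real.exp (-c*t) := by
            apply mul_le_mul_of_nonneg_left _ (Real.sqrt_nonneg _)
            apply Real.exp_le_exp.mpr
            nlinarith
    calc ‖x i t - y k‖ ≤ ‖x i t - x i (k:ℝ)‖ + ‖x i (k:ℝ) - y k‖ := by
          have h4 : x i t - y k = (x i t - x i (k:ℝ)) + (x i (k:ℝ) - y k) := by abel
          rw [h4]; exact norm_add_le _ _
      _ ≤ M/c * Real.exp (-c*t) + Real.sqrt (2*f 0) * Real.exp (-c*t) := add_le_add h1 h2
      _ = (M/c + Real.sqrt (2*f 0)) * Real.exp (-c*t) := by ring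
  have hten : Tendsto (fun k : ℕ => ‖x i t - y k‖) atTop (𝓝 ‖x i t - xstar‖) :=
    (tendsto_const_nhds.sub hxstar).norm
  have hfin := le_of_tendsto hten hbd
  calc ‖x i t - xstar‖ ≤ (M/c + Real.sqrt (2*f 0)) * Real.exp (-c*t) := hfin
    _ ≤ (M/c + Real.sqrt (2*f 0) + 1) * Real.exp (-c*t) := by
        nlinarith [Real.exp_pos (-c*t)]
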